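/- Let m ≥ 1, let f : [0,1] → [0,1] and π : [0,1] → ℝ^m be C^{m+1}, let p ∈ [0,1], and set q = f(p), P = π(p), Q = π(q). Assume that both p and q satisfy: π^{-1}(π(·)) is the singleton {·}, and the derivative vectors π^{(1)}(·), …, π^{(m)}(·) are linearly independent in ℝ^m. Let α = (π^{(1)}(p), …, π^{(m)}(p)) and β = (π^{(1)}(q), …, π^{(m)}(q)) be the canonical embedding bases at P and Q. Then the matrix of the Eckmann–Ruelle linearization M(P) with respect to the bases α and β is upper triangular with diagonal entries (f'(p))^j for j = 1, …, m; equivalently, M(P) π^{(i)}(p) − (f'(p))^i π^{(i)}(q) lies in the span of π^{(1)}(q), …, π^{(i−1)}(q) for each i. -/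

import Mathlib

open Set Filter Topology

private lemma jj8_sum_partSize {n : ℕ} (c : OrderedFinpartition n) :
    ∑ i : Fin c.length, c.partSize i = n := by
  classical
  have hinj := c.emb_injective
  have hsurj : Function.Surjective (fun (p : Σ i, Fin (c.partSize i)) ↦ c.emb p.1 p.2) := by
    intro x
    obtain ⟨i, j, hj⟩ := c.cover x
    exact ⟨⟨i, j⟩, hj⟩
  have := Fintype.card_of_bijective ⟨hinj, hsurj⟩
  simpa [Fintype.card_sigma] using this

private lemma jj8_strictMono_fin_id {n : ℕ} (g : Fin n → Fin n) (hg : StrictMono g) :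
    g = id := by
  suffices hr : Set.range g = Set.range id by
    have hs : Function.Surjective g := fun y => by
      have : y ∈ Set.range g := by rw [hr]; exact ⟨y, rfl⟩
      exact this
    funext x
    exact congrArg (fun e : Fin n ≃o Fin n => e x)
      (Subsingleton.elim (StrictMono.orderIsoOfSurjective g hg hs) (OrderIso.refl _))
  have hsurj : Function.Surjective g := Finite.surjective_of_injective hg.injective
  simp [Set.range_eq_univ.mpr hsurj]

private lemma jj8_eq_atomic_of_length_eq {n : ℕ} (c : OrderedFinpartition n)
    (h : c.length = n) : c = OrderedFinpartition.atomic n := by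
  have hsum := jj8_sum_partSize c
  have hone : ∀ i : Fin c.length, c.partSize i = 1 := by
    by_contra hc
    push_neg at hc
    obtain ⟨i, hi⟩ := hc
    have : n < ∑ j : Fin c.length, c.partSize j := by
      calc n = c.length := h.symm
      _ = ∑ _j : Fin c.length, 1 := by simp
      _ < ∑ j : Fin c.length, c.partSize j := by
          apply Finset.sum_lt_sum (fun j _ => c.partSize_pos j)
            ⟨i, Finset.mem_univ i, by have := c.partSize_pos i; omega⟩
    omega
  obtain ⟨len, ps, pos, emb, hes, hps, hd, hc⟩ := c
  dsimp at h hone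
  subst h
  have hps1 : ps = fun _ => 1 := funext hone
  subst hps1
  have hemb : emb = fun m _ => m := by
    have hg : StrictMono (fun m => emb m ⟨0, Nat.zero_lt_one⟩) := by
      convert hps using 2
      rfl
    have := jj8_strictMono_fin_id _ hg
    funext m j
    have hj : j = ⟨0, Nat.zero_lt_one⟩ := Subsingleton.elim _ _
    rw [hj]
    exact congrFun this m
  subst hemb
  rfl

private lemma jj8_faa {m : ℕ}
    (f : ℝ → ℝ) (ψ : ℝ → EuclideanSpace ℝ (Fin m))
    (hfmaps : MapsTo f (Icc (0:ℝ) 1) (Icc (0:ℝ) 1))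
    (hf : ContDiffOn ℝ (m + 1) f (Icc (0:ℝ) 1))
    (hψ : ContDiffOn ℝ (m + 1) ψ (Icc (0:ℝ) 1))
    (p : ℝ) (hp : p ∈ Icc (0:ℝ) 1) (i : Fin m) :
    iteratedDerivWithin ((i:ℕ) + 1) (ψ ∘ f) (Icc (0:ℝ) 1) p =
      ∑ c : OrderedFinpartition ((i:ℕ)+1),
        (∏ j : Fin c.length, iteratedDerivWithin (c.partSize j) f (Icc (0:ℝ) 1) p) •
          iteratedDerivWithin c.length ψ (Icc (0:ℝ) 1) (f p) := by
  have uD : UniqueDiffOn ℝ (Icc (0:ℝ) 1) := uniqueDiffOn_Icc zero_lt_one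
  have hψ' := hψ.ftaylorSeriesWithin uD
  have hf' := hf.ftaylorSeriesWithin uD
  have hcomp := hψ'.comp hf' hfmaps
  have hle : ((i:ℕ) + 1 : WithTop ℕ∞) ≤ (m + 1 : ℕ) := by
    exact_mod_cast Nat.add_le_add_right (le_of_lt i.2) 1
  have A := (hcomp.eq_iteratedFDerivWithin_of_uniqueDiffOn (m := (i:ℕ)+1) hle uD hp).symm
  rw [iteratedDerivWithin_eq_iteratedFDerivWithin, A]
  rw [FormalMultilinearSeries.taylorComp]
  rw [ContinuousMultilinearMap.sum_apply]
  congr 1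
  funext c
  rw [FormalMultilinearSeries.compAlongOrderedFinpartition_apply]
  have : (c.applyOrderedFinpartition
      (fun j => ftaylorSeriesWithin ℝ f (Icc (0:ℝ) 1) p (c.partSize j)) (fun _ => 1))
      = fun j => (iteratedDerivWithin (c.partSize j) f (Icc (0:ℝ) 1) p) • 1 := by
    funext j
    rw [OrderedFinpartition.applyOrderedFinpartition_apply]
    simp only [iteratedDerivWithin_eq_iteratedFDerivWithin, ftaylorSeriesWithin,
      smul_eq_mul, mul_one]
    rfl
  rw [this, ContinuousMultilinearMap.map_smul_univ]
  rw [iteratedDerivWithin_eq_iteratedFDerivWithin]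
  rfl

/-- **Lemma JJ8** (upper triangular representation of the Eckmann–Ruelle linearization).
With respect to the canonical embedding bases `α = (ψ⁽¹⁾(p), …, ψ⁽ᵐ⁾(p))` at `P = ψ p` and
`β = (ψ⁽¹⁾(q), …, ψ⁽ᵐ⁾(q))` at `Q = ψ q`, `q = f p`, the Eckmann–Ruelle linearization `M`
is upper triangular with diagonal entries `(f'(p))ʲ`; equivalently, for each `i`,
`M ψ⁽ⁱ⁾(p) − (f'(p))ⁱ ψ⁽ⁱ⁾(q)` lies in the span of `ψ⁽¹⁾(q), …, ψ⁽ⁱ⁻¹⁾(q)`. -/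
theorem statement5 (m : ℕ) (hm : 1 ≤ m)
    (f : ℝ → ℝ) (ψ : ℝ → EuclideanSpace ℝ (Fin m))
    (hfmaps : MapsTo f (Icc (0:ℝ) 1) (Icc (0:ℝ) 1))
    (hf : ContDiffOn ℝ (m + 1) f (Icc (0:ℝ) 1))
    (hψ : ContDiffOn ℝ (m + 1) ψ (Icc (0:ℝ) 1))
    (p q : ℝ) (hp : p ∈ Icc (0:ℝ) 1) (hq : q = f p)
    (hinjp : ∀ x ∈ Icc (0:ℝ) 1, ψ x = ψ p → x = p)
    (hinjq : ∀ x ∈ Icc (0:ℝ) 1, ψ x = ψ q → x = q)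
    (hindepp : LinearIndependent ℝ
      (fun n : Fin m => iteratedDerivWithin ((n : ℕ) + 1) ψ (Icc (0:ℝ) 1) p))
    (hindepq : LinearIndependent ℝ
      (fun n : Fin m => iteratedDerivWithin ((n : ℕ) + 1) ψ (Icc (0:ℝ) 1) q))
    (M : EuclideanSpace ℝ (Fin m) →ₗ[ℝ] EuclideanSpace ℝ (Fin m))
    (hM : ∀ n : Fin m,
      M (iteratedDerivWithin ((n : ℕ) + 1) ψ (Icc (0:ℝ) 1) p)
        = iteratedDerivWithin ((n : ℕ) + 1) (ψ ∘ f) (Icc (0:ℝ) 1) p) :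
    ∀ i : Fin m,
      M (iteratedDerivWithin ((i : ℕ) + 1) ψ (Icc (0:ℝ) 1) p)
          - (derivWithin f (Icc (0:ℝ) 1) p) ^ ((i : ℕ) + 1) •
              iteratedDerivWithin ((i : ℕ) + 1) ψ (Icc (0:ℝ) 1) q
        ∈ Submodule.span ℝ
            (Set.range fun j : Fin (i : ℕ) =>
              iteratedDerivWithin ((j : ℕ) + 1) ψ (Icc (0:ℝ) 1) q) := by

  intro i
  subst hq
  have uD : UniqueDiffOn ℝ (Icc (0:ℝ) 1) := uniqueDiffOn_Icc zero_lt_one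
  rw [hM i, jj8_faa f ψ hfmaps hf hψ p hp i]
  classical
  -- split off the atomic partition
  set T : OrderedFinpartition ((i:ℕ)+1) → EuclideanSpace ℝ (Fin m) := fun c =>
    (∏ j : Fin c.length, iteratedDerivWithin (c.partSize j) f (Icc (0:ℝ) 1) p) •
      iteratedDerivWithin c.length ψ (Icc (0:ℝ) 1) (f p) with hT
  have hatomic : T (OrderedFinpartition.atomic ((i:ℕ)+1)) =
      (derivWithin f (Icc (0:ℝ) 1) p) ^ ((i:ℕ) + 1) •
        iteratedDerivWithin ((i:ℕ) + 1) ψ (Icc (0:ℝ) 1) (f p) := by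
    rw [hT]
    simp only [OrderedFinpartition.atomic_length, OrderedFinpartition.atomic_partSize]
    congr 1
    rw [Finset.prod_const, iteratedDerivWithin_one]
    simp
  rw [show (∑ c : OrderedFinpartition ((i:ℕ)+1), T c) =
      T (OrderedFinpartition.atomic ((i:ℕ)+1)) +
        ∑ c ∈ Finset.univ.erase (OrderedFinpartition.atomic ((i:ℕ)+1)), T c from
    (Finset.add_sum_erase _ _ (Finset.mem_univ _)).symm]
  rw [hatomic, add_sub_cancel_left]
  apply Submodule.sum_mem
  intro c hc
  rw [Finset.mem_erase] at hc
  apply Submodule.smul_mem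
  have hlen_le : c.length ≤ (i:ℕ) + 1 := c.length_le
  have hlen_pos : 0 < c.length := c.length_pos (Nat.succ_pos _)
  have hlen_ne : c.length ≠ (i:ℕ) + 1 := fun h => hc.1 (jj8_eq_atomic_of_length_eq c h)
  have hlt : c.length - 1 < (i:ℕ) := by omega
  apply Submodule.subset_span
  exact ⟨⟨c.length - 1, hlt⟩, by simp; congr 1; omega⟩
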